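/- With the recursion x^λ_1 = min(λ,2), x^λ_2 = 1, x^λ_{2j+1} = 1 + min(x^λ_{2j−1}, x^λ_{2j}), x^λ_{2j+2} = (1−1/2^j) + max(x^λ_{2j−1}, x^λ_{2j}) for 1 ≤ j < r, the map λ ↦ (x^λ_{2r−1}, x^λ_{2r}) restricted to λ ∈ [0,2] is a piecewise linear curve whose image is a staircase with 2^{r−1} ordinary segments: for each integer 0 ≤ k < 2^{r-2}, on [4k/2^{r−1}, (4k+2)/2^{r−1}] the coordinate x^λ_{2r−1} increases linearly while x^λ_{2r} is constant, and on [(4k+2)/2^{r−1}, (4k+4)/2^{r−1}] the coordinate x^λ_{2r} increases linearly while x^λ_{2r−1} is constant. -/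

import Mathlib

theorem stair_aux (r : ℕ) (x : ℝ → ℕ → ℝ)
    (h1 : ∀ lam : ℝ, x lam 1 = min lam 2)
    (h2 : ∀ lam : ℝ, x lam 2 = 1)
    (hodd : ∀ lam : ℝ, ∀ j : ℕ, 1 ≤ j → j < r →
      x lam (2 * j + 1) = 1 + min (x lam (2 * j - 1)) (x lam (2 * j)))
    (heven : ∀ lam : ℝ, ∀ j : ℕ, 1 ≤ j → j < r →
      x lam (2 * j + 2) = (1 - 1 / 2 ^ j) + max (x lam (2 * j - 1)) (x lam (2 * j))) :
    ∀ t : ℕ, 1 ≤ t → t ≤ r → ∀ i : ℕ, i < 2 ^ (t - 1) → ∃ a : ℝ,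
      ∀ lam : ℝ, (i : ℝ) * (2 / 2 ^ (t - 1)) ≤ lam →
        lam ≤ ((i : ℝ) + 1) * (2 / 2 ^ (t - 1)) →
        if Even i then
          x lam (2 * t - 1) = a + (lam - (i : ℝ) * (2 / 2 ^ (t - 1))) ∧
          x lam (2 * t) = a + 1 / 2 ^ (t - 1)
        else
          x lam (2 * t) = a + (lam - (i : ℝ) * (2 / 2 ^ (t - 1))) ∧
          x lam (2 * t - 1) = a + 1 / 2 ^ (t - 1) := by
  intro t ht1
  induction t, ht1 using Nat.le_induction with
  | base =>
    intro _ i hi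
    interval_cases i
    refine ⟨0, fun lam hl hl2 => ?_⟩
    simp only [Nat.cast_zero, pow_zero] at hl hl2 ⊢
    norm_num at hl hl2 ⊢
    constructor
    · rw [h1]; exact min_eq_left hl2
    · rw [h2]
  | succ t ht1 IH =>
    intro htr i hi
    have htr' : t < r := htr
    have hts : t - 1 + 1 = t := by omega
    have e : (2:ℝ) ^ t = 2 * 2 ^ (t - 1) := by
      rw [← pow_succ', hts]
    have hpos : (0:ℝ) < 2 ^ (t - 1) := by positivity
    have h2pos : (0:ℝ) < 2 ^ t := by positivity
    have hd : (0:ℝ) ≤ 2 / 2 ^ t := by positivity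
    have g1 : 2 * (t + 1) - 1 = 2 * t + 1 := by omega
    have g2 : 2 * (t + 1) = 2 * t + 2 := by omega
    rcases Nat.even_or_odd i with ⟨q, rfl⟩ | ⟨q, rfl⟩
    · -- i = q + q : first half of parent interval q
      have hi' : q + q < 2 ^ t := hi
      have en : 2 ^ t = 2 * 2 ^ (t - 1) := by rw [← pow_succ', hts]
      have hq : q < 2 ^ (t - 1) := by omega
      obtain ⟨a, ha⟩ := IH (le_of_lt htr') q hq
      refine ⟨1 + a, fun lam hl hl2 => ?_⟩
      rw [if_pos (Even.add_self q)]
      push_cast at hl hl2 ⊢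
      have eq1 : ((q:ℝ) + q) * (2 / 2 ^ t) = (q:ℝ) * (2 / 2 ^ (t - 1)) := by
        rw [e]; field_simp; ring
      have eq2 : ((q:ℝ) + q + 2) * (2 / 2 ^ t) = ((q:ℝ) + 1) * (2 / 2 ^ (t - 1)) := by
        rw [e]; field_simp; ring
      have eq3 : (1:ℝ) / 2 ^ (t - 1) = 2 / 2 ^ t := by
        rw [e]; field_simp
      have hl' : (q:ℝ) * (2 / 2 ^ (t - 1)) ≤ lam := by linarith
      have hl2' : lam ≤ ((q:ℝ) + 1) * (2 / 2 ^ (t - 1)) := by linarith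
      have hmid : lam - (q:ℝ) * (2 / 2 ^ (t - 1)) ≤ 1 / 2 ^ (t - 1) := by linarith
      have key := ha lam hl' hl2'
      have hmin : min (x lam (2 * t - 1)) (x lam (2 * t))
          = a + (lam - (q:ℝ) * (2 / 2 ^ (t - 1))) := by
        split_ifs at key with hp
        · rw [key.1, key.2, min_eq_left]; linarith
        · rw [key.1, key.2, min_eq_right]; linarith
      have hmax : max (x lam (2 * t - 1)) (x lam (2 * t)) = a + 1 / 2 ^ (t - 1) := by
        split_ifs at key with hp
        · rw [key.1, key.2, max_eq_right]; linarith
        · rw [key.1, key.2, max_eq_left]; linarith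
      rw [g1, g2, hodd lam t ht1 htr', heven lam t ht1 htr', hmin, hmax]
      constructor
      · rw [e]; field_simp; ring
      · rw [e]; field_simp; ring
    · -- i = 2q + 1 : second half of parent interval q
      have hi' : 2 * q + 1 < 2 ^ t := hi
      have en : 2 ^ t = 2 * 2 ^ (t - 1) := by rw [← pow_succ', hts]
      have hq : q < 2 ^ (t - 1) := by omega
      obtain ⟨a, ha⟩ := IH (le_of_lt htr') q hq
      refine ⟨a + 1 + 1 / 2 ^ t, fun lam hl hl2 => ?_⟩
      rw [if_neg (by simp [Nat.even_iff, Nat.add_mul_mod_self_left])]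
      push_cast at hl hl2 ⊢
      have eq1 : (2 * (q:ℝ)) * (2 / 2 ^ t) = (q:ℝ) * (2 / 2 ^ (t - 1)) := by
        rw [e]; field_simp
      have eq2 : (2 * (q:ℝ) + 2) * (2 / 2 ^ t) = ((q:ℝ) + 1) * (2 / 2 ^ (t - 1)) := by
        rw [e]; field_simp
      have eq3 : (1:ℝ) / 2 ^ (t - 1) = 2 / 2 ^ t := by
        rw [e]; field_simp
      have hl' : (q:ℝ) * (2 / 2 ^ (t - 1)) ≤ lam := by linarith
      have hl2' : lam ≤ ((q:ℝ) + 1) * (2 / 2 ^ (t - 1)) := by linarith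
      have hmid : (1:ℝ) / 2 ^ (t - 1) ≤ lam - (q:ℝ) * (2 / 2 ^ (t - 1)) := by linarith
      have key := ha lam hl' hl2'
      have hmin : min (x lam (2 * t - 1)) (x lam (2 * t)) = a + 1 / 2 ^ (t - 1) := by
        split_ifs at key with hp
        · rw [key.1, key.2, min_eq_right]; linarith
        · rw [key.1, key.2, min_eq_left]; linarith
      have hmax : max (x lam (2 * t - 1)) (x lam (2 * t))
          = a + (lam - (q:ℝ) * (2 / 2 ^ (t - 1))) := by
        split_ifs at key with hp
        · rw [key.1, key.2, max_eq_left]; linarith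
        · rw [key.1, key.2, max_eq_right]; linarith
      rw [g1, g2, hodd lam t ht1 htr', heven lam t ht1 htr', hmin, hmax]
      constructor
      · rw [e]; field_simp; ring
      · rw [e]; field_simp; ring

/-- The last two coordinates of the tropical central path of the "long and
winding" linear program form a staircase with `2^{r-1}` segments: for each
`0 ≤ k < 2^{r-2}`, on the interval `[4k/2^{r-1}, (4k+2)/2^{r-1}]` the
coordinate `x^λ_{2r-1}` increases linearly while `x^λ_{2r}` is constant, and on
`[(4k+2)/2^{r-1}, (4k+4)/2^{r-1}]` the coordinate `x^λ_{2r}` increases linearly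
while `x^λ_{2r-1}` is constant. -/
theorem tropical_central_path_staircase (r : ℕ) (hr : 2 ≤ r) (x : ℝ → ℕ → ℝ)
    (h1 : ∀ lam : ℝ, x lam 1 = min lam 2)
    (h2 : ∀ lam : ℝ, x lam 2 = 1)
    (hodd : ∀ lam : ℝ, ∀ j : ℕ, 1 ≤ j → j < r →
      x lam (2 * j + 1) = 1 + min (x lam (2 * j - 1)) (x lam (2 * j)))
    (heven : ∀ lam : ℝ, ∀ j : ℕ, 1 ≤ j → j < r →
      x lam (2 * j + 2) =
        (1 - 1 / 2 ^ j) + max (x lam (2 * j - 1)) (x lam (2 * j)))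
    (k : ℕ) (hk : k < 2 ^ (r - 2)) :
    (∃ m : ℝ, 0 < m ∧
      ∀ lam ∈ Set.Icc ((4 * k : ℝ) / 2 ^ (r - 1)) ((4 * k + 2 : ℝ) / 2 ^ (r - 1)),
        x lam (2 * r - 1) =
            x ((4 * k : ℝ) / 2 ^ (r - 1)) (2 * r - 1) +
              m * (lam - (4 * k : ℝ) / 2 ^ (r - 1)) ∧
          x lam (2 * r) = x ((4 * k : ℝ) / 2 ^ (r - 1)) (2 * r)) ∧
    (∃ m : ℝ, 0 < m ∧
      ∀ lam ∈ Set.Icc ((4 * k + 2 : ℝ) / 2 ^ (r - 1))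
          ((4 * k + 4 : ℝ) / 2 ^ (r - 1)),
        x lam (2 * r) =
            x ((4 * k + 2 : ℝ) / 2 ^ (r - 1)) (2 * r) +
              m * (lam - (4 * k + 2 : ℝ) / 2 ^ (r - 1)) ∧
          x lam (2 * r - 1) = x ((4 * k + 2 : ℝ) / 2 ^ (r - 1)) (2 * r - 1)) := by
  have hpos : (0:ℝ) < 2 ^ (r - 1) := by positivity
  have hr1 : 1 ≤ r := by omega
  have erad : 2 ^ (r - 1) = 2 * 2 ^ (r - 2) := by
    rw [← pow_succ']
    congr 1
    omega
  have aux := stair_aux r x h1 h2 hodd heven r hr1 le_rfl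
  constructor
  · -- first segment: i = 2 * k, even
    have hik : 2 * k < 2 ^ (r - 1) := by omega
    obtain ⟨a, ha⟩ := aux (2 * k) hik
    have hE : Even (2 * k) := even_two_mul k
    have eL : ((2 * k : ℕ) : ℝ) * (2 / 2 ^ (r - 1)) = (4 * k : ℝ) / 2 ^ (r - 1) := by
      push_cast; field_simp; ring
    have eR : (((2 * k : ℕ) : ℝ) + 1) * (2 / 2 ^ (r - 1)) = (4 * k + 2 : ℝ) / 2 ^ (r - 1) := by
      push_cast; field_simp; ring
    rw [eL, eR] at ha
    refine ⟨1, one_pos, fun lam hlam => ?_⟩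
    have hLR : (4 * k : ℝ) / 2 ^ (r - 1) ≤ (4 * k + 2 : ℝ) / 2 ^ (r - 1) := by
      gcongr
      linarith
    have hL := ha ((4 * k : ℝ) / 2 ^ (r - 1)) le_rfl hLR
    have hlam' := ha lam hlam.1 hlam.2
    rw [if_pos hE] at hL hlam'
    refine ⟨?_, ?_⟩
    · rw [hlam'.1, hL.1]; ring
    · rw [hlam'.2, hL.2]
  · -- second segment: i = 2 * k + 1, odd
    have hik : 2 * k + 1 < 2 ^ (r - 1) := by omega
    obtain ⟨a, ha⟩ := aux (2 * k + 1) hik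
    have hO : ¬ Even (2 * k + 1) := by simp [Nat.even_iff, Nat.add_mul_mod_self_left]
    have eL : ((2 * k + 1 : ℕ) : ℝ) * (2 / 2 ^ (r - 1)) = (4 * k + 2 : ℝ) / 2 ^ (r - 1) := by
      push_cast; field_simp; ring
    have eR : (((2 * k + 1 : ℕ) : ℝ) + 1) * (2 / 2 ^ (r - 1)) = (4 * k + 4 : ℝ) / 2 ^ (r - 1) := by
      push_cast; field_simp; ring
    rw [eL, eR] at ha
    refine ⟨1, one_pos, fun lam hlam => ?_⟩
    have hLR : (4 * k + 2 : ℝ) / 2 ^ (r - 1) ≤ (4 * k + 4 : ℝ) / 2 ^ (r - 1) := by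
      gcongr
      linarith
    have hL := ha ((4 * k + 2 : ℝ) / 2 ^ (r - 1)) le_rfl hLR
    have hlam' := ha lam hlam.1 hlam.2
    rw [if_neg hO] at hL hlam'
    refine ⟨?_, ?_⟩
    · rw [hlam'.1, hL.1]; ring
    · rw [hlam'.2, hL.2]
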